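/- Fix m > 0. If (Cₙ) is a sequence of real numbers converging to C₀ ∈ ℝ, then there exists a subsequence (C_{n_k}) such that the corresponding functions u_{C_{n_k}} converge uniformly on [1, m+1] to u_{C₀}. -/

import Mathlib

open Set Filter

/-- The coefficient `A(C)` from the paper (depending on `m`). -/
noncomputable def Acoef (m C : ℝ) : ℝ :=
  3 * C / m * (1 - 1 / (m + 1) ^ 2) - 6 / m * (1 + 1 / (m + 1) ^ 2)

/-- The coefficient `B(C)` from the paper (depending on `m`). -/
noncomputable def Bcoef (m C : ℝ) : ℝ :=
  -2 * C * (1 + 1 / m - 1 / (m * (m + 1) ^ 2)) + 4 * (1 + 1 / m + 1 / (m * (m + 1) ^ 2))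

/-- The polynomial `p_C(γ) = A(C)·γ³/3 + B(C)·γ²/2 + C`. -/
noncomputable def pC (m C γ : ℝ) : ℝ :=
  Acoef m C * γ ^ 3 / 3 + Bcoef m C * γ ^ 2 / 2 + C

/-- The right-hand side `2√2·√(v γ) + p_C(γ)·γ` of the ODE. -/
noncomputable def odeRHS (m C : ℝ) (v : ℝ → ℝ) (γ : ℝ) : ℝ :=
  2 * Real.sqrt 2 * Real.sqrt (v γ) + pC m C γ * γ

/-- `v` is a `C¹` nonnegative solution of the ODE IVP
`v' = 2√2·√v + p_C(γ)·γ`, `v 1 = 2`, on the set `S`. -/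
def IsSolOn (m C : ℝ) (v : ℝ → ℝ) (S : Set ℝ) : Prop :=
  v 1 = 2 ∧ ∀ γ ∈ S, 0 ≤ v γ ∧ HasDerivWithinAt v (odeRHS m C v γ) S γ

/-- `v` is a solution of the IVP on `S` which cannot be continued to any strictly
larger subinterval of `[1, m+1]`, i.e. `S` is the maximal interval of existence. -/
def IsMaxSolOn (m C : ℝ) (v : ℝ → ℝ) (S : Set ℝ) : Prop :=
  IsSolOn m C v S ∧
    ∀ T : Set ℝ, T ⊆ Set.Icc 1 (m + 1) → T.OrdConnected → S ⊆ T → S ≠ T →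
      ¬∃ w : ℝ → ℝ, IsSolOn m C w T ∧ ∀ γ ∈ S, w γ = v γ

/-- `u` is the extended solution `u_C : [1, m+1] → ℝ` associated to the parameter `C`:
either the solution `v_C` exists on all of `[1, m+1]` and `u = v_C`, or the maximal
interval of existence of `v_C` is `[1, γ⋆) ⊊ [1, m+1]` and `u` equals `v_C` there and
`0` outside of it. -/
def IsExtSol (m C : ℝ) (u : ℝ → ℝ) : Prop :=
  IsSolOn m C u (Set.Icc 1 (m + 1)) ∨
    ∃ r ∈ Set.Ioc (1 : ℝ) (m + 1),
      IsMaxSolOn m C u (Set.Ico 1 r) ∧ ∀ γ, γ ∉ Set.Ico (1 : ℝ) r → u γ = 0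

open Topology
/-- auxiliary: ∂p/∂C -/
noncomputable def qfun (m γ : ℝ) : ℝ :=
  (1 - 1/(m+1)^2)/m * γ^3 - (1 + 1/m - 1/(m*(m+1)^2)) * γ^2 + 1

/-- auxiliary: ∂p/∂γ -/
noncomputable def pd (m C γ : ℝ) : ℝ := Acoef m C * γ^2 + Bcoef m C * γ

noncomputable def qd (m γ : ℝ) : ℝ :=
  3*(1 - 1/(m+1)^2)/m * γ^2 - 2*(1 + 1/m - 1/(m*(m+1)^2)) * γ

lemma pC_sub (m C C' γ : ℝ) (hm : 0 < m) :
    pC m C γ - pC m C' γ = (C - C') * qfun m γ := by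
  have h1 : m ≠ 0 := ne_of_gt hm
  have h2 : m + 1 ≠ 0 := by positivity
  unfold pC Acoef Bcoef qfun
  field_simp
  ring

lemma qfun_factor (m γ : ℝ) (hm : 0 < m) :
    qfun m γ = (γ - 1) * (γ - (m+1)) * ((1 - 1/(m+1)^2)/m * γ + 1/(m+1)) := by
  have h1 : m ≠ 0 := ne_of_gt hm
  have h2 : m + 1 ≠ 0 := by positivity
  unfold qfun
  field_simp
  ring

lemma qfun_neg (m γ : ℝ) (hm : 0 < m) (h1 : 1 < γ) (h2 : γ < m + 1) :
    qfun m γ < 0 := by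
  rw [qfun_factor m γ hm]
  have hs : (0:ℝ) < 1 - 1/(m+1)^2 := by
    have : (1:ℝ) < (m+1)^2 := by nlinarith
    have : 1/(m+1)^2 < 1 := by
      rw [div_lt_one (by positivity)]; exact this
    linarith
  have h3 : 0 < (1 - 1/(m+1)^2)/m * γ + 1/(m+1) := by positivity
  have h4 : 0 < γ - 1 := by linarith
  have h5 : γ - (m+1) < 0 := by linarith
  exact mul_neg_of_neg_of_pos (mul_neg_of_pos_of_neg h4 h5) h3

lemma wronskian_identity (m C γ : ℝ) (hm : 0 < m) :
    pd m C γ * qfun m γ - pC m C γ * qd m γ =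
      (2*γ/(m*(m+1)^2)) * ((γ-(m+1))^2*(γ+2*(m+1)) + (γ-1)^2*(γ+2)) := by
  have h1 : m ≠ 0 := ne_of_gt hm
  have h2 : m + 1 ≠ 0 := by positivity
  unfold pd pC qfun qd Acoef Bcoef
  field_simp
  ring

lemma pd_neg (m C γ : ℝ) (hm : 0 < m) (h1 : 1 < γ) (h2 : γ < m + 1)
    (hp : pC m C γ = 0) : pd m C γ < 0 := by
  have hW := wronskian_identity m C γ hm
  rw [hp, zero_mul, sub_zero] at hW
  have hpos : 0 < (2*γ/(m*(m+1)^2)) * ((γ-(m+1))^2*(γ+2*(m+1)) + (γ-1)^2*(γ+2)) := by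
    have e1 : (0:ℝ) ≤ (γ-(m+1))^2*(γ+2*(m+1)) := by positivity
    have e2 : (0:ℝ) < (γ-1)^2*(γ+2) := by nlinarith
    have : (0:ℝ) < 2*γ/(m*(m+1)^2) := by positivity
    nlinarith
  rw [← hW] at hpos
  have hq := qfun_neg m γ hm h1 h2
  by_contra h
  push_neg at h
  nlinarith

lemma pC_at_top (m C : ℝ) (hm : 0 < m) : pC m C (m+1) = -2 := by
  have h1 : m ≠ 0 := ne_of_gt hm
  have h2 : m + 1 ≠ 0 := by positivity
  unfold pC Acoef Bcoef
  field_simp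
  ring

lemma hasDerivAt_gfun (m C γ : ℝ) :
    HasDerivAt (fun x => pC m C x * x) (pd m C γ * γ + pC m C γ) γ := by
  have h : HasDerivAt (fun x : ℝ => Acoef m C * x ^ 4 / 3 + Bcoef m C * x ^ 3 / 2 + C * x)
      (Acoef m C * (4 * γ ^ 3) / 3 + Bcoef m C * (3 * γ ^ 2) / 2 + C * 1) γ := by
    have h4 : HasDerivAt (fun x : ℝ => x ^ 4) (4 * γ ^ 3) γ := by
      simpa using hasDerivAt_pow 4 γ
    have h3 : HasDerivAt (fun x : ℝ => x ^ 3) (3 * γ ^ 2) γ := by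
      simpa using hasDerivAt_pow 3 γ
    exact (((h4.const_mul _).div_const 3).add ((h3.const_mul _).div_const 2)).add
      ((hasDerivAt_id γ).const_mul C)
  have heq : (fun x => pC m C x * x) =
      (fun x : ℝ => Acoef m C * x ^ 4 / 3 + Bcoef m C * x ^ 3 / 2 + C * x) := by
    funext x; unfold pC; ring
  rw [heq]
  convert h using 1
  unfold pd pC; ring

lemma two_sqrt_two_mul_sqrt_le (x : ℝ) (hx : 0 ≤ x) :
    2 * Real.sqrt 2 * Real.sqrt x ≤ x + 2 := by
  nlinarith [sq_nonneg (Real.sqrt x - Real.sqrt 2), Real.sq_sqrt hx,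
    Real.sq_sqrt (by norm_num : (0:ℝ) ≤ 2), Real.sqrt_nonneg x, Real.sqrt_nonneg 2]

lemma sol_continuousOn {m C : ℝ} {v : ℝ → ℝ} {S : Set ℝ}
    (hs : IsSolOn m C v S) : ContinuousOn v S :=
  fun γ hγ => ((hs.2 γ hγ).2).continuousWithinAt

lemma sol_pos {m C : ℝ} {v : ℝ → ℝ} (hm : 0 < m)
    (hs : IsSolOn m C v (Icc 1 (m+1))) :
    ∀ γ ∈ Ico (1:ℝ) (m+1), 0 < v γ := by
  intro γ₀ hγ₀
  obtain ⟨hv1, hsol⟩ := hs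
  rcases eq_or_lt_of_le (hsol γ₀ (Ico_subset_Icc_self hγ₀)).1 with h0 | h
  swap
  · exact h
  exfalso
  have hγ1 : 1 < γ₀ := by
    rcases eq_or_lt_of_le hγ₀.1 with h | h
    · exfalso; rw [← h, hv1] at h0; norm_num at h0
    · exact h
  have hmem : Icc (1:ℝ) (m+1) ∈ 𝓝 γ₀ := Icc_mem_nhds hγ1 hγ₀.2
  have hda : HasDerivAt v (odeRHS m C v γ₀) γ₀ :=
    ((hsol γ₀ (Ico_subset_Icc_self hγ₀)).2).hasDerivAt hmem
  have hlm : IsLocalMin v γ₀ := by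
    filter_upwards [hmem] with x hx
    rw [← h0]; exact (hsol x hx).1
  have hz := hlm.hasDerivAt_eq_zero hda
  unfold odeRHS at hz
  rw [← h0, Real.sqrt_zero, mul_zero, zero_add] at hz
  have hγ0ne : γ₀ ≠ 0 := by linarith
  have hpz : pC m C γ₀ = 0 := (mul_eq_zero.1 hz).resolve_right hγ0ne
  have hpd := pd_neg m C γ₀ hm hγ1 hγ₀.2 hpz
  have hgd : HasDerivAt (fun x => pC m C x * x) (pd m C γ₀ * γ₀) γ₀ := by
    have h := hasDerivAt_gfun m C γ₀
    rwa [hpz, add_zero] at h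
  have hgdneg : pd m C γ₀ * γ₀ < 0 := mul_neg_of_neg_of_pos hpd (by linarith)
  -- eventually (pC m C z * z) > 0 for z slightly to the left of γ₀
  have hts : Tendsto (slope (fun x => pC m C x * x) γ₀) (𝓝[<] γ₀) (𝓝 (pd m C γ₀ * γ₀)) :=
    (hasDerivAt_iff_tendsto_slope.1 hgd).mono_left
      (nhdsWithin_mono γ₀ (fun z hz => ne_of_lt hz))
  have hev : ∀ᶠ z in 𝓝[<] γ₀, 0 < pC m C z * z := by
    have hneg : ∀ᶠ z in 𝓝[<] γ₀, slope (fun x => pC m C x * x) γ₀ z < 0 :=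
      hts.eventually_lt_const hgdneg
    filter_upwards [hneg, self_mem_nhdsWithin] with z hz hz'
    have hzlt : z < γ₀ := hz'
    rw [slope_def_field] at hz
    have hdiv : (pC m C z * z - pC m C γ₀ * γ₀) / (z - γ₀) < 0 := by
      simpa [div_eq_inv_mul] using hz
    rw [hpz, zero_mul, sub_zero] at hdiv
    rcases div_neg_iff.1 hdiv with ⟨hp, hq⟩ | ⟨hp, hq⟩
    · exact hp
    · linarith
  have hIoo : Ioo (1:ℝ) γ₀ ∈ 𝓝[<] γ₀ := Ioo_mem_nhdsLT hγ1
  have hboth : {z | 0 < pC m C z * z} ∩ Ioo 1 γ₀ ∈ 𝓝[<] γ₀ := inter_mem hev hIoo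
  obtain ⟨l, hl, hsub⟩ := mem_nhdsLT_iff_exists_Ioo_subset.1 hboth
  set c := max l 1 with hc
  have hcγ : c < γ₀ := max_lt hl hγ1
  have hc1 : (1:ℝ) ≤ c := le_max_right l 1
  have hIccsub : Icc c γ₀ ⊆ Icc 1 (m+1) := Icc_subset_Icc hc1 (le_of_lt hγ₀.2)
  have hIoosub : Ioo c γ₀ ⊆ Icc 1 (m+1) := fun x hx => hIccsub (Ioo_subset_Icc_self hx)
  have hsm : StrictMonoOn v (Icc c γ₀) := by
    apply strictMonoOn_of_hasDerivWithinAt_pos (convex_Icc c γ₀)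
      ((sol_continuousOn ⟨hv1, hsol⟩).mono hIccsub) (f' := fun x => odeRHS m C v x)
    · intro x hx
      have hx2 : x ∈ Ioo c γ₀ := by rwa [interior_Icc] at hx
      exact ((hsol x (hIoosub hx2)).2).mono (by rw [interior_Icc]; exact hIoosub)
    · intro x hx
      rw [interior_Icc] at hx
      have hx' : x ∈ {z | 0 < pC m C z * z} ∩ Ioo 1 γ₀ := by
        apply hsub
        exact ⟨lt_of_le_of_lt (le_max_left l 1) hx.1, hx.2⟩
      have hsq : 0 ≤ 2 * Real.sqrt 2 * Real.sqrt (v x) := by positivity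
      have hgpos : 0 < pC m C x * x := hx'.1
      unfold odeRHS
      linarith
  have hlt : v c < v γ₀ :=
    hsm ⟨le_rfl, le_of_lt hcγ⟩ ⟨le_of_lt hcγ, le_rfl⟩ hcγ
  have hnn : 0 ≤ v c := (hsol c (hIccsub ⟨le_rfl, le_of_lt hcγ⟩)).1
  rw [← h0] at hlt
  linarith

noncomputable def Gb (m C : ℝ) : ℝ :=
  (|Acoef m C| *(m+1)^3/3 + |Bcoef m C| *(m+1)^2/2 + |C|) * (m+1)

noncomputable def Qb (m : ℝ) : ℝ := ((1/m)*(m+1)^3 + (1+1/m)*(m+1)^2 + 1) * (m+1)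

noncomputable def Rb (m C : ℝ) : ℝ := (4 + Gb m C) * Real.exp m

lemma Gb_nonneg (m C : ℝ) (hm : 0 < m) : 0 ≤ Gb m C := by
  have h1 : (0:ℝ) < m + 1 := by linarith
  apply mul_nonneg _ h1.le
  have := abs_nonneg (Acoef m C); have := abs_nonneg (Bcoef m C); have := abs_nonneg C
  positivity

lemma Qb_pos (m : ℝ) (hm : 0 < m) : 0 < Qb m := by
  have h1 : (0:ℝ) < m + 1 := by linarith
  have h2 : (0:ℝ) < 1/m := by positivity
  apply mul_pos _ h1
  positivity

lemma gfun_abs_le (m C γ : ℝ) (hm : 0 < m) (hγ : γ ∈ Icc 1 (m+1)) :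
    |pC m C γ * γ| ≤ Gb m C := by
  have h1 : (0:ℝ) < m + 1 := by linarith
  have hγ0 : (0:ℝ) ≤ γ := by linarith [hγ.1]
  have habs : |γ| ≤ m + 1 := abs_le.2 ⟨by linarith [hγ.1], hγ.2⟩
  rw [abs_mul]
  have hp : |pC m C γ| ≤ |Acoef m C| *(m+1)^3/3 + |Bcoef m C| *(m+1)^2/2 + |C| := by
    unfold pC
    refine (abs_add_three _ _ _).trans ?_
    have e1 : |Acoef m C * γ ^ 3 / 3| = |Acoef m C| * |γ|^3 / 3 := by
      rw [abs_div, abs_mul, abs_pow]; norm_num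
    have e2 : |Bcoef m C * γ ^ 2 / 2| = |Bcoef m C| * |γ|^2 / 2 := by
      rw [abs_div, abs_mul, abs_pow]; norm_num
    rw [e1, e2]
    have t1 : |Acoef m C| * |γ|^3 ≤ |Acoef m C| * (m+1)^3 :=
      mul_le_mul_of_nonneg_left (pow_le_pow_left₀ (abs_nonneg γ) habs 3) (abs_nonneg _)
    have t2 : |Bcoef m C| * |γ|^2 ≤ |Bcoef m C| * (m+1)^2 :=
      mul_le_mul_of_nonneg_left (pow_le_pow_left₀ (abs_nonneg γ) habs 2) (abs_nonneg _)
    linarith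
  unfold Gb
  apply mul_le_mul hp habs (abs_nonneg _)
  have := abs_nonneg (Acoef m C); have := abs_nonneg (Bcoef m C); have := abs_nonneg C
  positivity

lemma qfun_abs_le (m γ : ℝ) (hm : 0 < m) (hγ : γ ∈ Icc 1 (m+1)) :
    |qfun m γ * γ| ≤ Qb m := by
  have h1 : (0:ℝ) < m + 1 := by linarith
  have hγ0 : (0:ℝ) ≤ γ := by linarith [hγ.1]
  have habs : |γ| ≤ m + 1 := abs_le.2 ⟨by linarith [hγ.1], hγ.2⟩
  have hsq : (1:ℝ) ≤ (m+1)^2 := by nlinarith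
  have hs0 : (0:ℝ) < 1/(m+1)^2 := by positivity
  have hs1 : 1/(m+1)^2 ≤ 1 := by
    rw [div_le_one (by positivity)]; exact hsq
  have hs2 : 1/(m*(m+1)^2) ≤ 1/m := by
    rw [div_le_div_iff₀ (by positivity) hm]; nlinarith
  have hs3 : (0:ℝ) < 1/(m*(m+1)^2) := by positivity
  have hq : |qfun m γ| ≤ (1/m)*(m+1)^3 + (1+1/m)*(m+1)^2 + 1 := by
    unfold qfun
    have step : |(1 - 1/(m+1)^2)/m * γ^3 - (1 + 1/m - 1/(m*(m+1)^2)) * γ^2 + 1| ≤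
        |(1 - 1/(m+1)^2)/m * γ^3| + |(1 + 1/m - 1/(m*(m+1)^2)) * γ^2| + 1 := by
      refine (abs_add_le _ _).trans ?_
      have := abs_sub ((1 - 1/(m+1)^2)/m * γ^3) ((1 + 1/m - 1/(m*(m+1)^2)) * γ^2)
      simp only [abs_one]
      linarith [abs_sub_abs_le_abs_sub ((1 - 1/(m+1)^2)/m * γ^3) ((1 + 1/m - 1/(m*(m+1)^2)) * γ^2),
        abs_sub ((1 - 1/(m+1)^2)/m * γ^3) ((1 + 1/m - 1/(m*(m+1)^2)) * γ^2)]
    refine step.trans ?_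
    have e1 : |(1 - 1/(m+1)^2)/m * γ^3| ≤ (1/m)*(m+1)^3 := by
      rw [abs_mul, abs_pow]
      have c1 : |(1 - 1/(m+1)^2)/m| ≤ 1/m := by
        rw [abs_of_nonneg (by apply div_nonneg _ hm.le; linarith)]
        gcongr
        linarith
      exact mul_le_mul c1 (pow_le_pow_left₀ (abs_nonneg γ) habs 3) (by positivity) (by positivity)
    have e2 : |(1 + 1/m - 1/(m*(m+1)^2)) * γ^2| ≤ (1+1/m)*(m+1)^2 := by
      rw [abs_mul, abs_pow]
      have c2 : |1 + 1/m - 1/(m*(m+1)^2)| ≤ 1 + 1/m := by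
        rw [abs_of_nonneg (by linarith)]
        linarith
      exact mul_le_mul c2 (pow_le_pow_left₀ (abs_nonneg γ) habs 2) (by positivity) (by positivity)
    linarith
  unfold Qb
  rw [abs_mul]
  apply mul_le_mul hq habs (abs_nonneg _)
  have h2 : (0:ℝ) < 1/m := by positivity
  positivity

lemma gronwallBound_le_aux (m G x : ℝ) (hG : 0 ≤ G) (hx0 : 0 ≤ x) (hxm : x ≤ m) :
    gronwallBound 2 1 (2+G) x ≤ (4+G) * Real.exp m := by
  rw [gronwallBound_of_K_ne_0 one_ne_zero]
  have h1 : Real.exp (1*x) ≤ Real.exp m := by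
    rw [one_mul]; exact Real.exp_le_exp.2 hxm
  have h2 : (1:ℝ) ≤ Real.exp (1*x) := by
    rw [one_mul]; exact Real.one_le_exp hx0
  have h3 : (0:ℝ) < Real.exp (1*x) := Real.exp_pos _
  nlinarith [Real.exp_pos m]

lemma sol_le_Rb {m C : ℝ} {v : ℝ → ℝ} {S : Set ℝ} {t : ℝ} (hm : 0 < m)
    (hsol : IsSolOn m C v S) (hS : S ⊆ Icc 1 (m+1)) (ht : Icc 1 t ⊆ S)
    (hnh : ∀ x ∈ Ico (1:ℝ) t, S ∈ 𝓝[Ici x] x) :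
    ∀ x ∈ Icc (1:ℝ) t, v x ≤ Rb m C := by
  intro x hx
  have h1t : (1:ℝ) ≤ t := le_trans hx.1 hx.2
  have htm : t ≤ m+1 := (hS (ht ⟨h1t, le_rfl⟩)).2
  have key := norm_le_gronwallBound_of_norm_deriv_right_le (f := v)
    (f' := fun y => odeRHS m C v y) (δ := 2) (K := 1) (ε := 2 + Gb m C) (a := 1) (b := t)
    ((sol_continuousOn hsol).mono ht)
    (fun y hy => ((hsol.2 y (ht (Ico_subset_Icc_self hy))).2).mono_of_mem_nhdsWithin (hnh y hy))
    (by rw [Real.norm_eq_abs, hsol.1]; norm_num)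
    ?bound x hx
  case bound =>
    intro y hy
    have hyS : y ∈ Icc (1:ℝ) (m+1) := hS (ht ⟨hy.1, hy.2.le⟩)
    have hv0 : 0 ≤ v y := (hsol.2 y (ht ⟨hy.1, hy.2.le⟩)).1
    have hgb := gfun_abs_le m C y hm hyS
    have hgb1 := (abs_le.1 hgb).1
    have hgb2 := (abs_le.1 hgb).2
    have hsq0 : 0 ≤ 2*Real.sqrt 2*Real.sqrt (v y) := by positivity
    have hsq2 := two_sqrt_two_mul_sqrt_le (v y) hv0
    rw [Real.norm_eq_abs, Real.norm_eq_abs, abs_of_nonneg hv0]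
    have hbeta : (fun y => odeRHS m C v y) y = 2*Real.sqrt 2*Real.sqrt (v y) + pC m C y * y := rfl
    rw [show odeRHS m C v y = _ from hbeta, abs_le]
    constructor
    · linarith
    · linarith
  have hvx : v x ≤ ‖v x‖ := le_abs_self _
  refine hvx.trans (key.trans ?_)
  unfold Rb
  exact gronwallBound_le_aux m (Gb m C) (x-1) (Gb_nonneg m C hm) (by linarith [hx.1]) (by linarith [hx.2])

lemma sqrt_sub_abs_le (a b c : ℝ) (hc : 0 < c) (ha : c ≤ a) (hb : c ≤ b) :
    |Real.sqrt a - Real.sqrt b| ≤ |a - b| / (2*Real.sqrt c) := by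
  have h2c : (0:ℝ) < 2*Real.sqrt c := by positivity
  rw [le_div_iff₀ h2c]
  have hsum : 2*Real.sqrt c ≤ Real.sqrt a + Real.sqrt b := by
    have l1 := Real.sqrt_le_sqrt ha
    have l2 := Real.sqrt_le_sqrt hb
    linarith
  have ha' := Real.sq_sqrt (hc.le.trans ha)
  have hb' := Real.sq_sqrt (hc.le.trans hb)
  have hid : (Real.sqrt a - Real.sqrt b) * (Real.sqrt a + Real.sqrt b) = a - b := by
    nlinarith [ha', hb']
  calc |Real.sqrt a - Real.sqrt b| * (2*Real.sqrt c)
      ≤ |Real.sqrt a - Real.sqrt b| * (Real.sqrt a + Real.sqrt b) :=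
        mul_le_mul_of_nonneg_left hsum (abs_nonneg _)
    _ = |(Real.sqrt a - Real.sqrt b) * (Real.sqrt a + Real.sqrt b)| := by
        rw [abs_mul, abs_of_nonneg (by positivity : (0:ℝ) ≤ Real.sqrt a + Real.sqrt b)]
    _ = |a - b| := by rw [hid]

lemma lipschitz_rhs (c g : ℝ) (hc : 0 < c) :
    LipschitzOnWith (Real.toNNReal (Real.sqrt 2 / Real.sqrt c))
      (fun x => 2*Real.sqrt 2*Real.sqrt x + g) (Ici c) := by
  rw [lipschitzOnWith_iff_dist_le_mul]
  intro x hx y hy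
  have hx' : c ≤ x := hx
  have hy' : c ≤ y := hy
  rw [Real.dist_eq, Real.dist_eq]
  have e1 : 2*Real.sqrt 2*Real.sqrt x + g - (2*Real.sqrt 2*Real.sqrt y + g)
      = 2*Real.sqrt 2*(Real.sqrt x - Real.sqrt y) := by ring
  rw [e1, abs_mul, abs_of_nonneg (by positivity : (0:ℝ) ≤ 2*Real.sqrt 2)]
  have h2 := sqrt_sub_abs_le x y c hc hx' hy'
  have hcoe : (Real.toNNReal (Real.sqrt 2 / Real.sqrt c) : ℝ) = Real.sqrt 2 / Real.sqrt c :=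
    Real.coe_toNNReal _ (by positivity)
  rw [hcoe]
  have hscpos : (0:ℝ) < Real.sqrt c := Real.sqrt_pos.2 hc
  calc 2*Real.sqrt 2 * |Real.sqrt x - Real.sqrt y|
      ≤ 2*Real.sqrt 2 * (|x - y| / (2*Real.sqrt c)) :=
        mul_le_mul_of_nonneg_left h2 (by positivity)
    _ = Real.sqrt 2 / Real.sqrt c * |x - y| := by field_simp

lemma continuous_gC (m C : ℝ) : Continuous (fun x : ℝ => pC m C x * x) := by
  have : Continuous (fun x : ℝ => Acoef m C * x ^ 3 / 3 + Bcoef m C * x ^ 2 / 2 + C) := by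
    exact (((continuous_const.mul (continuous_pow 3)).div_const 3).add
      ((continuous_const.mul (continuous_pow 2)).div_const 2)).add continuous_const
  exact this.mul continuous_id

lemma no_max_sol_on_Ico {m C : ℝ} {v : ℝ → ℝ} (hm : 0 < m) {r : ℝ}
    (hr : r ∈ Ioc (1:ℝ) (m+1)) (hmax : IsMaxSolOn m C v (Ico 1 r)) : False := by
  obtain ⟨⟨hv1, hpt⟩, hmaxP⟩ := hmax
  have hr1 : 1 < r := hr.1
  have hrm : r ≤ m + 1 := hr.2
  have hSsub : Ico (1:ℝ) r ⊆ Icc 1 (m+1) := fun y hy => ⟨hy.1, le_trans hy.2.le hrm⟩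
  have hnh : ∀ x ∈ Ico (1:ℝ) r, Ico (1:ℝ) r ∈ 𝓝[Ici x] x := by
    intro x hx
    have h1 : Iio r ∈ 𝓝 x := Iio_mem_nhds hx.2
    have h2 : Ici x ∩ Iio r ∈ 𝓝[Ici x] x :=
      inter_mem self_mem_nhdsWithin (mem_nhdsWithin_of_mem_nhds h1)
    exact mem_of_superset h2 (fun z hz => ⟨le_trans hx.1 hz.1, hz.2⟩)
  have hbd : ∀ x ∈ Ico (1:ℝ) r, v x ≤ Rb m C := by
    intro x hx
    exact sol_le_Rb hm ⟨hv1, hpt⟩ hSsub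
      (fun y hy => ⟨hy.1, lt_of_le_of_lt hy.2 hx.2⟩)
      (fun z hz => hnh z ⟨hz.1, lt_trans hz.2 hx.2⟩) x ⟨hx.1, le_rfl⟩
  have hRb0 : 0 ≤ Rb m C := by
    unfold Rb
    have := Gb_nonneg m C hm
    positivity
  set Kd := 2*Real.sqrt 2*Real.sqrt (Rb m C) + Gb m C with hKd
  have hKd0 : 0 ≤ Kd := by
    have := Gb_nonneg m C hm
    positivity
  have hdb : ∀ x ∈ Ico (1:ℝ) r, ‖odeRHS m C v x‖ ≤ Kd := by
    intro x hx
    have hv0 : 0 ≤ v x := (hpt x hx).1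
    have hgb := gfun_abs_le m C x hm (hSsub hx)
    have hgb1 := (abs_le.1 hgb).1
    have hgb2 := (abs_le.1 hgb).2
    have hsq : Real.sqrt (v x) ≤ Real.sqrt (Rb m C) := Real.sqrt_le_sqrt (hbd x hx)
    have hsq' : 2*Real.sqrt 2*Real.sqrt (v x) ≤ 2*Real.sqrt 2*Real.sqrt (Rb m C) :=
      mul_le_mul_of_nonneg_left hsq (by positivity)
    have hsq0 : 0 ≤ 2*Real.sqrt 2*Real.sqrt (v x) := by positivity
    rw [Real.norm_eq_abs]
    unfold odeRHS
    rw [abs_le]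
    constructor
    · linarith
    · linarith
  have hlip : LipschitzOnWith (Real.toNNReal Kd) v (Ico 1 r) := by
    apply Convex.lipschitzOnWith_of_nnnorm_hasDerivWithin_le (convex_Ico 1 r)
      (f' := fun x => odeRHS m C v x) (fun x hx => (hpt x hx).2)
    intro x hx
    have h := hdb x hx
    have : (‖odeRHS m C v x‖₊ : ℝ) ≤ (Real.toNNReal Kd : ℝ) := by
      rw [coe_nnnorm, Real.coe_toNNReal _ hKd0]; exact h
    exact_mod_cast this
  obtain ⟨gext, hglip, hgeq⟩ := hlip.extend_real
  set L := gext r with hLdef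
  have hIoo : Ioo (1:ℝ) r ∈ 𝓝[<] r := Ioo_mem_nhdsLT hr1
  have htend : Tendsto v (𝓝[<] r) (𝓝 L) := by
    have hg : Tendsto gext (𝓝[<] r) (𝓝 L) :=
      (hglip.continuous.tendsto r).mono_left nhdsWithin_le_nhds
    apply hg.congr'
    filter_upwards [hIoo] with z hz using (hgeq ⟨le_of_lt hz.1, hz.2⟩).symm
  have hL0 : 0 ≤ L := by
    have hvnn : ∀ᶠ z in 𝓝[<] r, 0 ≤ v z := by
      filter_upwards [hIoo] with z hz using (hpt z ⟨le_of_lt hz.1, hz.2⟩).1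
    exact ge_of_tendsto htend hvnn
  set w := Function.update v r L with hwdef
  have hweq : ∀ x ∈ Ico (1:ℝ) r, w x = v x :=
    fun x hx => Function.update_of_ne (ne_of_lt hx.2) _ _
  have hwr : w r = L := Function.update_self _ _ _
  have hweqg : EqOn w gext (Icc 1 r) := by
    intro x hx
    rcases eq_or_lt_of_le hx.2 with he | hlt
    · rw [he, hwr]
    · rw [hweq x ⟨hx.1, hlt⟩]; exact hgeq ⟨hx.1, hlt⟩
  have hwcont : ContinuousOn w (Icc 1 r) :=
    (hglip.continuous.continuousOn).congr hweqg
  have hder : ∀ x ∈ Ico (1:ℝ) r, HasDerivWithinAt w (odeRHS m C w x) (Icc 1 r) x := by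
    intro x hx
    have h1 : HasDerivWithinAt v (odeRHS m C v x) (Ico 1 r) x := (hpt x hx).2
    have hIcoMem : Ico (1:ℝ) r ∈ 𝓝[Icc 1 r] x := by
      have ha : Iio r ∈ 𝓝 x := Iio_mem_nhds hx.2
      have hb : Icc (1:ℝ) r ∩ Iio r ∈ 𝓝[Icc 1 r] x :=
        inter_mem self_mem_nhdsWithin (mem_nhdsWithin_of_mem_nhds ha)
      exact mem_of_superset hb (fun z hz => ⟨hz.1.1, hz.2⟩)
    have h2 : HasDerivWithinAt v (odeRHS m C v x) (Icc 1 r) x :=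
      h1.mono_of_mem_nhdsWithin hIcoMem
    have h3 : HasDerivWithinAt w (odeRHS m C v x) (Icc 1 r) x := by
      apply h2.congr_of_eventuallyEq _ (hweq x hx)
      filter_upwards [hIcoMem] with z hz using hweq z hz
    have he : odeRHS m C w x = odeRHS m C v x := by
      unfold odeRHS; rw [hweq x hx]
    rw [he]; exact h3
  have hdiffIoo : ∀ x ∈ Ioo (1:ℝ) r, HasDerivAt w (odeRHS m C v x) x := by
    intro x hx
    have hIcoNhds : Ico (1:ℝ) r ∈ 𝓝 x :=
      mem_of_superset (Ioo_mem_nhds hx.1 hx.2) Ioo_subset_Ico_self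
    have h1 : HasDerivAt v (odeRHS m C v x) x :=
      ((hpt x (Ioo_subset_Ico_self hx)).2).hasDerivAt hIcoNhds
    apply h1.congr_of_eventuallyEq
    filter_upwards [Iio_mem_nhds hx.2] with z hz
    exact Function.update_of_ne (ne_of_lt hz) _ _
  have hcw : ContinuousWithinAt w (Ioo 1 r) r :=
    (hwcont r (right_mem_Icc.2 (le_of_lt hr1))).mono Ioo_subset_Icc_self
  have hdtend : Tendsto (fun x => deriv w x) (𝓝[<] r)
      (𝓝 (2*Real.sqrt 2*Real.sqrt L + pC m C r * r)) := by
    have hev : (fun x => deriv w x) =ᶠ[𝓝[<] r] (fun x => odeRHS m C v x) := by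
      filter_upwards [hIoo] with x hx using (hdiffIoo x hx).deriv
    rw [tendsto_congr' hev]
    show Tendsto (fun x => 2*Real.sqrt 2*Real.sqrt (v x) + pC m C x * x) _ _
    apply Tendsto.add
    · have h1 : Tendsto (fun x => Real.sqrt (v x)) (𝓝[<] r) (𝓝 (Real.sqrt L)) :=
        (Real.continuous_sqrt.tendsto L).comp htend
      exact h1.const_mul _
    · exact ((continuous_gC m C).tendsto r).mono_left nhdsWithin_le_nhds
  have hdiffW : DifferentiableOn ℝ w (Ioo 1 r) :=
    fun x hx => (hdiffIoo x hx).differentiableAt.differentiableWithinAt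
  have hdr : HasDerivWithinAt w (2*Real.sqrt 2*Real.sqrt L + pC m C r * r) (Iic r) r :=
    hasDerivWithinAt_Iic_of_tendsto_deriv hdiffW hcw hIoo hdtend
  have hdr' : HasDerivWithinAt w (odeRHS m C w r) (Icc 1 r) r := by
    have he : odeRHS m C w r = 2*Real.sqrt 2*Real.sqrt L + pC m C r * r := by
      unfold odeRHS; rw [hwr]
    rw [he]; exact hdr.mono Icc_subset_Iic_self
  have hwsol : IsSolOn m C w (Icc 1 r) := by
    constructor
    · rw [hweq 1 ⟨le_rfl, hr1⟩]; exact hv1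
    · intro γ hγ
      rcases eq_or_lt_of_le hγ.2 with he | hlt
      · subst he
        exact ⟨by rw [hwr]; exact hL0, hdr'⟩
      · have hγ' : γ ∈ Ico (1:ℝ) r := ⟨hγ.1, hlt⟩
        exact ⟨by rw [hweq γ hγ']; exact (hpt γ hγ').1, hder γ hγ'⟩
  have hne : Ico (1:ℝ) r ≠ Icc (1:ℝ) r := by
    intro h
    have hmem : r ∈ Icc (1:ℝ) r := right_mem_Icc.2 (le_of_lt hr1)
    rw [← h] at hmem
    exact absurd hmem.2 (lt_irrefl r)
  exact hmaxP (Icc 1 r) (Icc_subset_Icc le_rfl hrm) ordConnected_Icc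
    Ico_subset_Icc_self hne ⟨w, hwsol, fun γ hγ => hweq γ hγ⟩

lemma extSol_isSolOn {m C : ℝ} {u : ℝ → ℝ} (hm : 0 < m) (h : IsExtSol m C u) :
    IsSolOn m C u (Icc 1 (m+1)) := by
  rcases h with h | ⟨r, hr, hmax, _⟩
  · exact h
  · exact absurd (no_max_sol_on_Ico hm hr hmax) not_false

open scoped NNReal

lemma exp_sub_one_le (y : ℝ) (hy : 0 ≤ y) : Real.exp y - 1 ≤ y * Real.exp y := by
  have h1 := Real.add_one_le_exp (-y)
  have h2 : Real.exp (-y) * Real.exp y = 1 := by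
    rw [← Real.exp_add]; norm_num
  nlinarith [Real.exp_pos y, mul_le_mul_of_nonneg_right h1 (Real.exp_pos y).le]

lemma gronwallBound_zero_le (K ε x X : ℝ) (hK : 0 ≤ K) (hε : 0 ≤ ε) (hx : 0 ≤ x)
    (hX : x ≤ X) : gronwallBound 0 K ε x ≤ ε * X * Real.exp (K * X) := by
  have hXX : 0 ≤ X := le_trans hx hX
  have hee : Real.exp (K*x) ≤ Real.exp (K*X) := Real.exp_le_exp.2 (by nlinarith)
  rcases eq_or_lt_of_le hK with h0 | hKpos
  · rw [← h0]
    rw [show gronwallBound 0 0 ε x = 0 + ε * x from congrFun (gronwallBound_K0 0 ε) x]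
    have h1 : (1:ℝ) ≤ Real.exp (0 * X) := by rw [zero_mul]; simp [Real.exp_zero]
    nlinarith [mul_le_mul_of_nonneg_left hX hε,
      mul_le_mul_of_nonneg_left h1 (mul_nonneg hε hXX)]
  · rw [gronwallBound_of_K_ne_0 (ne_of_gt hKpos)]
    have key := exp_sub_one_le (K*x) (by positivity)
    have h3 : ε/K * (Real.exp (K*x) - 1) ≤ ε/K * (K * x * Real.exp (K*x)) := by
      apply mul_le_mul_of_nonneg_left key (by positivity)
    have h4 : ε/K * (K * x * Real.exp (K*x)) = ε * x * Real.exp (K*x) := by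
      field_simp
    have h5 : ε * x * Real.exp (K*x) ≤ ε * X * Real.exp (K*X) := by
      apply mul_le_mul (by nlinarith) hee (Real.exp_pos _).le (by positivity)
    nlinarith [Real.exp_pos (K*x)]

noncomputable def KcR (δ : ℝ) : ℝ := Real.sqrt 2 / Real.sqrt (δ/2)

noncomputable def rhoB (m δ dC : ℝ) : ℝ := (Qb m * dC) * (m+1) * Real.exp (KcR δ * (m+1))

lemma KcR_nonneg (δ : ℝ) : 0 ≤ KcR δ := by unfold KcR; positivity

lemma tube_estimate {m C₀ Cn : ℝ} {u₀ un : ℝ → ℝ} (hm : 0 < m)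
    (h₀ : IsSolOn m C₀ u₀ (Icc 1 (m+1))) (hn : IsSolOn m Cn un (Icc 1 (m+1)))
    {b δ : ℝ} (hb : b ∈ Icc (1:ℝ) (m+1)) (hδ : 0 < δ)
    (hδu : ∀ γ ∈ Icc (1:ℝ) b, δ ≤ u₀ γ)
    (hρδ : rhoB m δ |Cn - C₀| < δ/2) :
    ∀ γ ∈ Icc (1:ℝ) b, dist (un γ) (u₀ γ) ≤ rhoB m δ |Cn - C₀| := by
  have hC2 : (0:ℝ) < δ/2 := by linarith
  set Kc : ℝ≥0 := Real.toNNReal (KcR δ) with hKcdef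
  have hKcoe : (Kc : ℝ) = KcR δ := Real.coe_toNNReal _ (KcR_nonneg δ)
  set Q := Qb m * |Cn - C₀| with hQdef
  have hQ0 : 0 ≤ Q := mul_nonneg (Qb_pos m hm).le (abs_nonneg _)
  set F : ℝ → ℝ → ℝ := fun t x => 2*Real.sqrt 2*Real.sqrt x + pC m C₀ t * t with hFdef
  have hF : ∀ t : ℝ, LipschitzOnWith Kc (F t) (Ici (δ/2)) := by
    intro t
    have := lipschitz_rhs (δ/2) (pC m C₀ t * t) hC2
    rw [hKcdef]
    unfold KcR
    exact this
  have hgro : ∀ x, 0 ≤ x → x ≤ m + 1 →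
      gronwallBound 0 (Kc : ℝ) (Q + 0) x ≤ rhoB m δ |Cn - C₀| := by
    intro x hx0 hx1
    have h := gronwallBound_zero_le (Kc:ℝ) (Q+0) x (m+1) (by rw [hKcoe]; exact KcR_nonneg δ)
      (by linarith) hx0 hx1
    unfold rhoB
    rw [← hKcoe]
    rw [add_zero] at h
    rw [← hQdef, add_zero]
    exact h
  have hmemIci : ∀ t : ℝ, 1 ≤ t → t < m + 1 → Icc (1:ℝ) (m+1) ∈ 𝓝[Ici t] t := by
    intro t h1 h2
    have ha : Iio (m+1) ∈ 𝓝 t := Iio_mem_nhds h2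
    have hb' : Ici t ∩ Iio (m+1) ∈ 𝓝[Ici t] t :=
      inter_mem self_mem_nhdsWithin (mem_nhdsWithin_of_mem_nhds ha)
    exact mem_of_superset hb' (fun z hz => ⟨le_trans h1 hz.1, hz.2.le⟩)
  have main : ∀ T, T ∈ Icc (1:ℝ) b → (∀ t ∈ Ico (1:ℝ) T, δ/2 ≤ un t) →
      ∀ t ∈ Icc (1:ℝ) T, dist (un t) (u₀ t) ≤ gronwallBound 0 (Kc:ℝ) (Q + 0) (t - 1) := by
    intro T hT htube
    have hTm : T ≤ m + 1 := le_trans hT.2 hb.2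
    have hsubT : Icc (1:ℝ) T ⊆ Icc 1 (m+1) := Icc_subset_Icc le_rfl hTm
    apply dist_le_of_approx_trajectories_ODE_of_mem (v := F) (s := fun _ => Ici (δ/2)) (fun t _ => hF t)
      (f' := fun t => odeRHS m Cn un t) (g' := fun t => odeRHS m C₀ u₀ t)
      (εf := Q) (εg := 0) (δ := 0)
    · exact (sol_continuousOn hn).mono hsubT
    · intro t ht
      exact ((hn.2 t (hsubT (Ico_subset_Icc_self ht))).2).mono_of_mem_nhdsWithin
        (hmemIci t ht.1 (lt_of_lt_of_le ht.2 hTm))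
    · intro t ht
      have htIcc : t ∈ Icc (1:ℝ) (m+1) := hsubT (Ico_subset_Icc_self ht)
      have e1 : odeRHS m Cn un t - F t (un t) = (pC m Cn t - pC m C₀ t) * t := by
        unfold odeRHS; rw [hFdef]; ring
      rw [Real.dist_eq, e1, pC_sub m Cn C₀ t hm]
      have : (Cn - C₀) * qfun m t * t = (Cn - C₀) * (qfun m t * t) := by ring
      rw [this, abs_mul]
      calc |Cn - C₀| * |qfun m t * t| ≤ |Cn - C₀| * Qb m :=
            mul_le_mul_of_nonneg_left (qfun_abs_le m t hm htIcc) (abs_nonneg _)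
        _ = Q := by rw [hQdef]; ring
    · exact fun t ht => htube t ht
    · exact (sol_continuousOn h₀).mono hsubT
    · intro t ht
      exact ((h₀.2 t (hsubT (Ico_subset_Icc_self ht))).2).mono_of_mem_nhdsWithin
        (hmemIci t ht.1 (lt_of_lt_of_le ht.2 hTm))
    · intro t ht
      have he : odeRHS m C₀ u₀ t = F t (u₀ t) := rfl
      rw [he, dist_self]
    · intro t ht
      have : δ ≤ u₀ t := hδu t ⟨ht.1, le_trans ht.2.le hT.2⟩
      show δ/2 ≤ u₀ t
      linarith
    · rw [hn.1, h₀.1, dist_self]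
  -- bootstrap: un never reaches δ/2 on [1, b)
  have htube_all : ∀ t ∈ Ico (1:ℝ) b, δ/2 ≤ un t := by
    by_contra hcon
    push_neg at hcon
    obtain ⟨t₀, ht₀, hlt₀⟩ := hcon
    set B := {t ∈ Icc (1:ℝ) b | un t ≤ δ/2} with hBdef
    have hBne : B.Nonempty := ⟨t₀, ⟨Ico_subset_Icc_self ht₀, hlt₀.le⟩⟩
    have hBbdd : BddBelow B := ⟨1, fun x hx => hx.1.1⟩
    have hBclosed : IsClosed B := by
      have : B = Icc (1:ℝ) b ∩ un ⁻¹' (Iic (δ/2)) := by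
        ext z; simp [hBdef, and_comm]
      rw [this]
      apply ContinuousOn.preimage_isClosed_of_isClosed
        ((sol_continuousOn hn).mono (Icc_subset_Icc le_rfl hb.2)) isClosed_Icc isClosed_Iic
    set t₁ := sInf B with ht₁def
    have ht₁B : t₁ ∈ B := hBclosed.csInf_mem hBne hBbdd
    have hδ2 : δ ≤ 2 := by
      have := hδu 1 ⟨le_rfl, hb.1⟩
      rw [h₀.1] at this; linarith
    have ht₁1 : 1 < t₁ := by
      rcases eq_or_lt_of_le ht₁B.1.1 with he | h
      · exfalso
        have := ht₁B.2
        rw [← he, hn.1] at this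
        linarith
      · exact h
    have htube1 : ∀ t ∈ Ico (1:ℝ) t₁, δ/2 ≤ un t := by
      intro t ht
      by_contra h
      push_neg at h
      have : t₁ ≤ t := csInf_le hBbdd ⟨⟨ht.1, le_trans ht.2.le ht₁B.1.2⟩, h.le⟩
      exact absurd this (not_le.2 ht.2)
    have hest := main t₁ ht₁B.1 htube1 t₁ ⟨ht₁1.le, le_rfl⟩
    have hgrole := hgro (t₁ - 1) (by linarith) (by linarith [ht₁B.1.2, hb.2])
    have hd : δ/2 ≤ dist (un t₁) (u₀ t₁) := by
      rw [Real.dist_eq]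
      have h1 : u₀ t₁ - un t₁ ≤ |un t₁ - u₀ t₁| := by
        rw [abs_sub_comm]; exact le_abs_self _
      have h2 : δ ≤ u₀ t₁ := hδu t₁ ht₁B.1
      have h3 : un t₁ ≤ δ/2 := ht₁B.2
      linarith
    linarith
  intro γ hγ
  exact (main b ⟨hb.1, le_rfl⟩ htube_all γ hγ).trans (hgro (γ-1) (by linarith [hγ.1])
    (by linarith [hγ.2, hb.2]))

lemma tail_bound {m Cn : ℝ} {un : ℝ → ℝ} (hm : 0 < m)
    (hn : IsSolOn m Cn un (Icc 1 (m+1))) {b c : ℝ}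
    (hb : b ∈ Ico (1:ℝ) (m+1)) (hc : 0 < c) (hstart : un b < c)
    (hneg : ∀ γ ∈ Icc b (m+1), 2*Real.sqrt 2*Real.sqrt c + pC m Cn γ * γ < 0) :
    ∀ γ ∈ Icc b (m+1), un γ < c := by
  by_contra hcon
  push_neg at hcon
  obtain ⟨γ₀, hγ₀, hge⟩ := hcon
  set B := {t ∈ Icc b (m+1) | c ≤ un t} with hBdef
  have hsubb : Icc b (m+1) ⊆ Icc (1:ℝ) (m+1) := Icc_subset_Icc hb.1 le_rfl
  have hBne : B.Nonempty := ⟨γ₀, ⟨hγ₀, hge⟩⟩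
  have hBbdd : BddBelow B := ⟨b, fun x hx => hx.1.1⟩
  have hBclosed : IsClosed B := by
    have : B = Icc b (m+1) ∩ un ⁻¹' (Ici c) := by
      ext z; simp [hBdef, and_comm]
    rw [this]
    apply ContinuousOn.preimage_isClosed_of_isClosed
      ((sol_continuousOn hn).mono hsubb) isClosed_Icc isClosed_Ici
  set t₁ := sInf B with ht₁def
  have ht₁B : t₁ ∈ B := hBclosed.csInf_mem hBne hBbdd
  have hbt₁ : b < t₁ := by
    rcases eq_or_lt_of_le ht₁B.1.1 with he | h
    · exfalso
      have := ht₁B.2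
      rw [← he] at this
      linarith
    · exact h
  have hlt : ∀ t ∈ Ico b t₁, un t < c := by
    intro t ht
    by_contra h
    push_neg at h
    have : t₁ ≤ t := csInf_le hBbdd ⟨⟨ht.1, le_trans ht.2.le ht₁B.1.2⟩, h⟩
    exact absurd this (not_le.2 ht.2)
  have hanti : StrictAntiOn un (Icc b t₁) := by
    apply strictAntiOn_of_hasDerivWithinAt_neg (convex_Icc b t₁)
      (f' := fun x => odeRHS m Cn un x)
      (((sol_continuousOn hn).mono (Icc_subset_Icc (by linarith [hb.1]) ht₁B.1.2)).mono
        (Icc_subset_Icc le_rfl le_rfl))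
    · intro x hx
      have hx2 : x ∈ Ioo b t₁ := by rwa [interior_Icc] at hx
      have hxm : x ∈ Icc (1:ℝ) (m+1) :=
        ⟨by linarith [hb.1, hx2.1], by linarith [hx2.2, ht₁B.1.2]⟩
      refine ((hn.2 x hxm).2).mono ?_
      rw [interior_Icc]
      exact fun z hz => ⟨by linarith [hb.1, hz.1], by linarith [hz.2, ht₁B.1.2]⟩
    · intro x hx
      have hx2 : x ∈ Ioo b t₁ := by rwa [interior_Icc] at hx
      have hxlt : un x < c := hlt x ⟨hx2.1.le, hx2.2⟩
      have hxm : x ∈ Icc b (m+1) := ⟨hx2.1.le, by linarith [hx2.2, ht₁B.1.2]⟩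
      have hsq : Real.sqrt (un x) ≤ Real.sqrt c := Real.sqrt_le_sqrt hxlt.le
      have hsq' : 2*Real.sqrt 2*Real.sqrt (un x) ≤ 2*Real.sqrt 2*Real.sqrt c :=
        mul_le_mul_of_nonneg_left hsq (by positivity)
      have := hneg x hxm
      show odeRHS m Cn un x < 0
      unfold odeRHS
      linarith
  have hfin : un t₁ < un b := hanti ⟨le_rfl, hbt₁.le⟩ ⟨hbt₁.le, le_rfl⟩ hbt₁
  have := ht₁B.2
  linarith

/-- Theorem 3.1.11: if `Cₙ → C₀`, then some subsequence of the extended solutions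
`u_{Cₙ}` converges uniformly on `[1, m+1]` to `u_{C₀}`. -/
theorem stmt8 (m : ℝ) (hm : 0 < m)
    (Cseq : ℕ → ℝ) (C₀ : ℝ) (hC : Filter.Tendsto Cseq Filter.atTop (nhds C₀))
    (u : ℕ → ℝ → ℝ) (u₀ : ℝ → ℝ)
    (hu : ∀ n, IsExtSol m (Cseq n) (u n)) (hu₀ : IsExtSol m C₀ u₀) :
    ∃ φ : ℕ → ℕ, StrictMono φ ∧
      TendstoUniformlyOn (fun k => u (φ k)) u₀ Filter.atTop (Set.Icc 1 (m + 1)) := by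
  have h₀ : IsSolOn m C₀ u₀ (Icc 1 (m+1)) := extSol_isSolOn hm hu₀
  have hsols : ∀ n, IsSolOn m (Cseq n) (u n) (Icc 1 (m+1)) := fun n => extSol_isSolOn hm (hu n)
  have hm1 : (1:ℝ) < m + 1 := by linarith
  have hcont₀ : ContinuousOn u₀ (Icc 1 (m+1)) := sol_continuousOn h₀
  have hpos₀ := sol_pos hm h₀
  have hQtend : Tendsto (fun n => Qb m * |Cseq n - C₀|) atTop (𝓝 0) := by
    have h1 : Tendsto (fun n => Cseq n - C₀) atTop (𝓝 0) := by
      simpa using hC.sub (tendsto_const_nhds : Tendsto (fun _ : ℕ => C₀) atTop (𝓝 C₀))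
    have h2 : Tendsto (fun n => |Cseq n - C₀|) atTop (𝓝 0) := by
      simpa using h1.abs
    simpa using h2.const_mul (Qb m)
  have hρtend : ∀ δ : ℝ, Tendsto (fun n => rhoB m δ |Cseq n - C₀|) atTop (𝓝 0) := by
    intro δ
    have := (hQtend.mul_const (m+1)).mul_const (Real.exp (KcR δ * (m+1)))
    simpa [rhoB] using this
  refine ⟨id, strictMono_id, ?_⟩
  rw [Metric.tendstoUniformlyOn_iff]
  intro ε hε
  simp only [id]
  rcases eq_or_lt_of_le (h₀.2 (m+1) (right_mem_Icc.2 hm1.le)).1 with hzero | hpos_top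
  · -- Case B : u₀ (m+1) = 0
    set ε' := min (ε/5) ((m+1)^2/100) with hε'def
    have hε'pos : 0 < ε' := by
      apply lt_min (by linarith)
      positivity
    have hε'1 : ε' ≤ ε/5 := min_le_left _ _
    have hε'2 : ε' ≤ (m+1)^2/100 := min_le_right _ _
    -- find the tail cutoff b
    have hgval : pC m C₀ (m+1) * (m+1) < -(m+1) := by
      rw [pC_at_top m C₀ hm]
      nlinarith
    have h1ev : ∀ᶠ γ in 𝓝 (m+1:ℝ), pC m C₀ γ * γ < -(m+1) := by
      have hct : Tendsto (fun γ : ℝ => pC m C₀ γ * γ) (𝓝 (m+1)) (𝓝 (pC m C₀ (m+1) * (m+1))) :=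
        (continuous_gC m C₀).continuousAt
      exact hct.eventually_lt_const hgval
    have h2ev : ∀ᶠ γ in 𝓝[Icc (1:ℝ) (m+1)] (m+1), u₀ γ < ε' := by
      have hct : Tendsto u₀ (𝓝[Icc (1:ℝ) (m+1)] (m+1)) (𝓝 (u₀ (m+1))) :=
        hcont₀ (m+1) (right_mem_Icc.2 hm1.le)
      rw [← hzero] at hct
      exact hct.eventually_lt_const hε'pos
    have h3ev : ∀ᶠ γ in 𝓝[Icc (1:ℝ) (m+1)] (m+1),
        u₀ γ < ε' ∧ pC m C₀ γ * γ < -(m+1) :=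
      h2ev.and (h1ev.filter_mono nhdsWithin_le_nhds)
    obtain ⟨t, htmem, htopen, htsub⟩ := mem_nhdsWithin.1 h3ev
    obtain ⟨r, hr0, hball⟩ := Metric.isOpen_iff.1 htmem (m+1) htopen
    set b := max 1 (m+1 - r/2) with hbdef
    have hb1 : (1:ℝ) ≤ b := le_max_left _ _
    have hb2 : b < m + 1 := by
      apply max_lt hm1
      linarith
    have hbtail : ∀ γ ∈ Icc b (m+1), u₀ γ < ε' ∧ pC m C₀ γ * γ < -(m+1) := by
      intro γ hγ
      apply htsub
      constructor
      · apply hball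
        rw [Metric.mem_ball, Real.dist_eq, abs_lt]
        have hbr : m + 1 - r/2 ≤ b := le_max_right _ _
        have hγr : m + 1 - r/2 ≤ γ := le_trans hbr hγ.1
        constructor
        · linarith
        · linarith [hγ.2]
      · exact ⟨le_trans hb1 hγ.1, hγ.2⟩
    -- min of u₀ on [1, b]
    obtain ⟨x₀, hx₀, hmin⟩ := isCompact_Icc.exists_isMinOn (nonempty_Icc.2 hb1)
      (hcont₀.mono (Icc_subset_Icc le_rfl hb2.le))
    set δ := u₀ x₀ with hδdef
    have hδpos : 0 < δ :=
      hpos₀ x₀ ⟨hx₀.1, lt_of_le_of_lt hx₀.2 hb2⟩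
    have hδu : ∀ γ ∈ Icc (1:ℝ) b, δ ≤ u₀ γ := fun γ hγ => isMinOn_iff.1 hmin γ hγ
    -- eventual bounds
    have hev1 : ∀ᶠ n in atTop, rhoB m δ |Cseq n - C₀| < min (δ/2) ε' :=
      (hρtend δ).eventually_lt_const (lt_min (by linarith) hε'pos)
    have hev2 : ∀ᶠ n in atTop, Qb m * |Cseq n - C₀| < (m+1)/4 :=
      hQtend.eventually_lt_const (by linarith)
    filter_upwards [hev1, hev2] with n h1n h2n
    have hρδ : rhoB m δ |Cseq n - C₀| < δ/2 := lt_of_lt_of_le h1n (min_le_left _ _)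
    have hρε : rhoB m δ |Cseq n - C₀| < ε' := lt_of_lt_of_le h1n (min_le_right _ _)
    have htube := tube_estimate hm h₀ (hsols n) ⟨hb1, hb2.le⟩ hδpos hδu hρδ
    -- the sqrt bound
    have hsqb : 2*Real.sqrt 2*Real.sqrt (3*ε') < (m+1)/2 := by
      have hs2 : (Real.sqrt 2)^2 = 2 := Real.sq_sqrt (by norm_num)
      have hs3 : (Real.sqrt (3*ε'))^2 = 3*ε' := Real.sq_sqrt (by positivity)
      have hsq : (2*Real.sqrt 2*Real.sqrt (3*ε'))^2 = 24*ε' := by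
        nlinarith [hs2, hs3]
      apply lt_of_pow_lt_pow_left₀ 2 (by positivity)
      rw [hsq]
      nlinarith
    have hneg : ∀ γ ∈ Icc b (m+1),
        2*Real.sqrt 2*Real.sqrt (3*ε') + pC m (Cseq n) γ * γ < 0 := by
      intro γ hγ
      have hγm : γ ∈ Icc (1:ℝ) (m+1) := ⟨le_trans hb1 hγ.1, hγ.2⟩
      have hdiff : pC m (Cseq n) γ * γ - pC m C₀ γ * γ = (Cseq n - C₀) * (qfun m γ * γ) := by
        have h := pC_sub m (Cseq n) C₀ γ hm
        linear_combination γ * h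
      have habs : |pC m (Cseq n) γ * γ - pC m C₀ γ * γ| ≤ Qb m * |Cseq n - C₀| := by
        rw [hdiff, abs_mul]
        calc |Cseq n - C₀| * |qfun m γ * γ| ≤ |Cseq n - C₀| * Qb m :=
              mul_le_mul_of_nonneg_left (qfun_abs_le m γ hm hγm) (abs_nonneg _)
          _ = Qb m * |Cseq n - C₀| := by ring
      have h1 := (abs_le.1 habs).2
      have h2 := (hbtail γ hγ).2
      linarith
    have hstart : u n b < 3*ε' := by
      have hd := htube b (right_mem_Icc.2 hb1)
      rw [Real.dist_eq] at hd
      have h1 := (abs_le.1 hd).2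
      have h2 := (hbtail b (left_mem_Icc.2 hb2.le)).1
      linarith
    have htail := tail_bound hm (hsols n) ⟨hb1, hb2⟩ (by positivity) hstart hneg
    intro x hx
    rcases le_or_gt x b with hxb | hxb
    · rw [dist_comm]
      have := htube x ⟨hx.1, hxb⟩
      have hεε : ε' < ε := by linarith
      exact lt_of_le_of_lt this (lt_trans hρε hεε)
    · have hxt : x ∈ Icc b (m+1) := ⟨hxb.le, hx.2⟩
      have h1 := htail x hxt
      have h2 := (hbtail x hxt).1
      have h3 : 0 ≤ u₀ x := (h₀.2 x hx).1
      have h4 : 0 ≤ u n x := ((hsols n).2 x hx).1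
      rw [Real.dist_eq, abs_lt]
      constructor
      · linarith
      · linarith
  · -- Case A : u₀ (m+1) > 0
    obtain ⟨x₀, hx₀, hmin⟩ := isCompact_Icc.exists_isMinOn (nonempty_Icc.2 hm1.le) hcont₀
    set δ := u₀ x₀ with hδdef
    have hδpos : 0 < δ := by
      rcases eq_or_lt_of_le hx₀.2 with he | h
      · rw [hδdef, he]; exact hpos_top
      · exact hpos₀ x₀ ⟨hx₀.1, h⟩
    have hev1 : ∀ᶠ n in atTop, rhoB m δ |Cseq n - C₀| < min (δ/2) ε :=
      (hρtend δ).eventually_lt_const (lt_min (by linarith) hε)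
    filter_upwards [hev1] with n h1n
    intro x hx
    have hρδ : rhoB m δ |Cseq n - C₀| < δ/2 := lt_of_lt_of_le h1n (min_le_left _ _)
    have htube := tube_estimate hm h₀ (hsols n) (right_mem_Icc.2 hm1.le) hδpos
      (fun γ hγ => isMinOn_iff.1 hmin γ hγ) hρδ
    rw [dist_comm]
    exact lt_of_le_of_lt (htube x hx) (lt_of_lt_of_le h1n (min_le_right _ _))
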